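/- Let G act properly on Q and let H = G_q be the stabilizer of a point q ∈ Q. Choose a G-invariant Riemannian metric and a linear slice S_q at q (the orthogonal complement of the tangent space to the orbit in T_qQ). For a tangent vector v = ξ_Q(q) + s ∈ T_qQ with s ∈ S_q and ξ ∈ 𝔤, the stabilizer of v under the tangent-lifted action is G_v = H_s ∩ H_{[ξ]}, where H acts linearly on S_q and on 𝔤/𝔥 via the induced adjoint action h·[ξ] = [Ad_h ξ]. -/
import Mathlib


/- STATEMENT 1: Let `H = G_q` be the (compact) stabilizer of `q`.  With a `G`-invariant metric
one has the `H`-invariant splitting `T_qQ = 𝔤·q ⊕ S_q`, the infinitesimal generator map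
`genq : 𝔤 → T_qQ`, `ξ ↦ ξ_Q(q)`, has kernel `𝔥`, is `H`-equivariant for the adjoint action on
`𝔤`, and its range together with the slice `S_q` spans `T_qQ`.  Then for
`v = ξ_Q(q) + s` with `s ∈ S_q`, the stabilizer of `v` under the (tangent-)lifted `H`-action
is `G_v = H_s ∩ H_{[ξ]}`, where `H` acts on `𝔤/𝔥` by `h • [ξ] = [Ad_h ξ]`. -/
theorem stmt1 {H 𝔤 T : Type*} [Group H]
    [AddCommGroup 𝔤] [Module ℝ 𝔤] [AddCommGroup T] [Module ℝ T]
    [DistribMulAction H 𝔤] [DistribMulAction H T]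
    (𝔥 : Submodule ℝ 𝔤)
    -- induced action of `H` on `𝔤/𝔥` (the adjoint action descends to the quotient)
    [DistribMulAction H (𝔤 ⧸ 𝔥)]
    (hquot : ∀ (h : H) (ξ : 𝔤),
      h • (Submodule.Quotient.mk ξ : 𝔤 ⧸ 𝔥) = Submodule.Quotient.mk (h • ξ))
    -- infinitesimal generator map at `q`, with kernel `𝔥`, `H`-equivariant
    (genq : 𝔤 →ₗ[ℝ] T)
    (hker : LinearMap.ker genq = 𝔥)
    (hequiv : ∀ (h : H) (ξ : 𝔤), genq (h • ξ) = h • genq ξ)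
    -- the slice: an `H`-invariant complement to the orbit directions
    (Sq : Submodule ℝ T)
    (hSinv : ∀ (h : H), ∀ s ∈ Sq, h • s ∈ Sq)
    (hcompl : IsCompl (LinearMap.range genq) Sq)
    (ξ : 𝔤) (s : T) (hs : s ∈ Sq) :
    MulAction.stabilizer H (genq ξ + s) =
      MulAction.stabilizer H (Submodule.Quotient.mk ξ : 𝔤 ⧸ 𝔥) ⊓
        MulAction.stabilizer H s := by
  ext h
  simp only [MulAction.mem_stabilizer_iff, Subgroup.mem_inf]
  constructor
  · intro hv
    have hv' : genq (h • ξ) + h • s = genq ξ + s := by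
      rw [hequiv, ← smul_add]; exact hv
    have hdiff : genq (h • ξ) - genq ξ = s - h • s := by
      linear_combination (norm := abel) hv'
    have h1 : genq (h • ξ) - genq ξ ∈ LinearMap.range genq := by
      rw [← map_sub]; exact LinearMap.mem_range_self _ _
    have h2 : genq (h • ξ) - genq ξ ∈ Sq := by
      rw [hdiff]; exact Sq.sub_mem hs (hSinv h s hs)
    have hz : genq (h • ξ) - genq ξ = 0 := by
      have hm : genq (h • ξ) - genq ξ ∈ (LinearMap.range genq ⊓ Sq : Submodule ℝ T) := ⟨h1, h2⟩
      rwa [hcompl.inf_eq_bot, Submodule.mem_bot] at hm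
    have hsz : h • s = s := by
      have h0 : s - h • s = 0 := by rw [← hdiff, hz]
      rw [sub_eq_zero] at h0; exact h0.symm
    refine ⟨?_, hsz⟩
    rw [hquot, Submodule.Quotient.eq, ← hker, LinearMap.mem_ker, map_sub, hz]
  · rintro ⟨hq, hss⟩
    have hξ : genq (h • ξ) = genq ξ := by
      rw [hquot] at hq
      have hmem : h • ξ - ξ ∈ 𝔥 := (Submodule.Quotient.eq 𝔥).mp hq
      rw [← hker, LinearMap.mem_ker, map_sub, sub_eq_zero] at hmem
      exact hmem
    rw [smul_add, ← hequiv, hξ, hss]
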